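/- For a normal location-scale model, the conditional sum-DB prior π^S(μ|σ) = Ca(μ | μ₀, Σ) with Σ = (σ₀⁴+σ⁴)/(σ₀²+σ²) arises as follows: the symmetrized KL divergence between N(μ,σ²) and N(μ₀,σ₀²) per observation equals D̄^S = (1/2)(σ²/σ₀² + σ₀²/σ² - 2) + (μ-μ₀)²(σ₀²+σ²)/(2σ₀²σ²), and for fixed σ, (1 + D̄^S)^{-1} as a function of μ is proportional to a Cauchy density centered at μ₀ with scale parameter √Σ' for appropriate Σ'. -/
import Mathlib


open Real

/-- Directed KL divergence between `N(μ₁,σ₁²)` and `N(μ₂,σ₂²)`. -/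
noncomputable def normKL (μ₁ σ₁ μ₂ σ₂ : ℝ) : ℝ :=
  Real.log (σ₂ / σ₁) + (σ₁^2 + (μ₁ - μ₂)^2) / (2 * σ₂^2) - 1/2

/-- For the normal location-scale model, the symmetrized KL divergence per
observation equals
`D̄^S = (1/2)(σ²/σ₀² + σ₀²/σ² - 2) + (μ-μ₀)²(σ₀²+σ²)/(2σ₀²σ²)`, and for fixed `σ`
the kernel `(1+D̄^S)⁻¹`, as a function of `μ`, is proportional to a Cauchy density
centered at `μ₀` with squared scale `Σ = (σ₀⁴+σ⁴)/(σ₀²+σ²)`. -/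
theorem normal_sumDB_conditional_Cauchy (μ₀ σ₀ σ : ℝ) (hσ₀ : 0 < σ₀) (hσ : 0 < σ) :
    (∀ μ : ℝ, normKL μ σ μ₀ σ₀ + normKL μ₀ σ₀ μ σ =
      (1/2) * (σ^2/σ₀^2 + σ₀^2/σ^2 - 2)
        + (μ - μ₀)^2 * (σ₀^2 + σ^2) / (2 * σ₀^2 * σ^2)) ∧
    ∃ C : ℝ, 0 < C ∧ ∀ μ : ℝ,
      (1 + ((1/2) * (σ^2/σ₀^2 + σ₀^2/σ^2 - 2)
          + (μ - μ₀)^2 * (σ₀^2 + σ^2) / (2 * σ₀^2 * σ^2)))⁻¹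
        = C * (1 + (μ - μ₀)^2 / ((σ₀^4 + σ^4) / (σ₀^2 + σ^2)))⁻¹ := by
  have h0 : σ₀ ≠ 0 := ne_of_gt hσ₀
  have h1 : σ ≠ 0 := ne_of_gt hσ
  have hq : (0:ℝ) < σ₀^4 + σ^4 := by positivity
  have hs : (0:ℝ) < σ₀^2 + σ^2 := by positivity
  constructor
  · intro μ
    unfold normKL
    have h2 : (μ₀ - μ)^2 = (μ - μ₀)^2 := by ring
    rw [h2, Real.log_div h0 h1, Real.log_div h1 h0]
    field_simp
    ring
  · refine ⟨2 * σ₀^2 * σ^2 / (σ₀^4 + σ^4), by positivity, fun μ => ?_⟩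
    have key : 1 + ((1/2) * (σ^2/σ₀^2 + σ₀^2/σ^2 - 2)
        + (μ - μ₀)^2 * (σ₀^2 + σ^2) / (2 * σ₀^2 * σ^2))
        = (σ₀^4 + σ^4 + (μ - μ₀)^2 * (σ₀^2 + σ^2)) / (2 * σ₀^2 * σ^2) := by
      field_simp
      ring
    have key2 : 1 + (μ - μ₀)^2 / ((σ₀^4 + σ^4) / (σ₀^2 + σ^2))
        = (σ₀^4 + σ^4 + (μ - μ₀)^2 * (σ₀^2 + σ^2)) / (σ₀^4 + σ^4) := by
      field_simp
    have hN : (0:ℝ) < σ₀^4 + σ^4 + (μ - μ₀)^2 * (σ₀^2 + σ^2) := by positivity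
    rw [key, key2]
    rw [inv_div, inv_div]
    field_simp
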